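/- Let p be an odd prime, let b be an integer, and let k be a natural number. Then v_k(−b,1) ≡ 0 (mod p) if and only if, in the quotient ring ℤ[x]/(x²+bx+1) with α the image of x, one has α^(2k) ≡ −1 (mod p), i.e., α^(2k) + 1 lies in the ideal generated by p. -/

import Mathlib

open Polynomial

/-- Companion Lucas sequence: `v 0 = 2`, `v 1 = A`, `v (n+2) = A·v (n+1) − B·v n`. -/
def lucasV (A B : ℤ) : ℕ → ℤ
  | 0 => 2
  | 1 => A
  | n + 2 => A * lucasV A B (n + 1) - B * lucasV A B n

theorem lucasV_dvd_iff (p : ℕ) [Fact p.Prime] (hodd : p % 2 = 1) (b : ℤ) (k : ℕ) :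
    (p : ℤ) ∣ lucasV (-b) 1 k ↔
      (Ideal.Quotient.mk (Ideal.span {(X : ℤ[X]) ^ 2 + C b * X + C 1}) X) ^ (2 * k) + 1
        ∈ Ideal.span {(p : ℤ[X] ⧸ Ideal.span {(X : ℤ[X]) ^ 2 + C b * X + C 1})} := by
  set f : ℤ[X] := X ^ 2 + C b * X + C 1 with hf
  set I : Ideal ℤ[X] := Ideal.span {f} with hI
  set mk := Ideal.Quotient.mk I with hmk
  set a : ℤ[X] ⧸ I := mk X with ha
  have hfa : a ^ 2 + mk (C b) * a + 1 = 0 := by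
    have h0 : mk f = 0 :=
      Ideal.Quotient.eq_zero_iff_mem.mpr (Ideal.subset_span (Set.mem_singleton _))
    calc a ^ 2 + mk (C b) * a + 1 = mk f := by simp [hf, ha, map_add, map_mul, map_pow]
    _ = 0 := h0
  have hu : IsUnit a := by
    refine IsUnit.of_mul_eq_one (a := a) (-(a + mk (C b))) ?_
    linear_combination -hfa
  have hp : ((p : ℤ[X] ⧸ I)) = mk (C (p : ℤ)) := by push_cast; rfl
  have key : ∀ k : ℕ, a ^ k * mk (C (lucasV (-b) 1 k)) = a ^ (2 * k) + 1 := by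
    intro k
    induction k using Nat.twoStepInduction with
    | zero =>
      show a ^ 0 * mk (C (2 : ℤ)) = a ^ (2 * 0) + 1
      have : mk (C (2 : ℤ)) = 2 := by push_cast; rfl
      rw [this]; ring
    | one =>
      show a ^ 1 * mk (C (-b)) = a ^ (2 * 1) + 1
      simp only [map_neg]
      linear_combination -hfa
    | more n ih0 ih1 =>
      show a ^ (n + 2) * mk (C (-b * lucasV (-b) 1 (n + 1) - 1 * lucasV (-b) 1 n))
        = a ^ (2 * (n + 2)) + 1
      simp only [map_sub, map_mul, map_neg, map_one]
      linear_combination (-(mk (C b)) * a) * ih1 + (-(a ^ 2)) * ih0 +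
        (-(a ^ (2 * n + 2) + 1)) * hfa
  have hconst : ∀ n : ℤ, mk (C n) ∈ Ideal.span {((p : ℤ[X] ⧸ I))} ↔ (p : ℤ) ∣ n := by
    intro n
    rw [Ideal.mem_span_singleton]
    constructor
    · rintro ⟨r, hr⟩
      obtain ⟨g, rfl⟩ := Ideal.Quotient.mk_surjective r
      have hmem : C n - C (p : ℤ) * g ∈ I := by
        rw [← Ideal.Quotient.eq_zero_iff_mem]
        rw [map_sub, map_mul, ← hp, ← hr]
        ring
      rw [hI, Ideal.mem_span_singleton] at hmem
      obtain ⟨q, hq⟩ := hmem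
      have hmap : C ((n : ZMod p)) =
          (f.map (Int.castRingHom (ZMod p))) * (q.map (Int.castRingHom (ZMod p))) := by
        have := congrArg (Polynomial.map (Int.castRingHom (ZMod p))) hq
        simpa [Polynomial.map_sub, Polynomial.map_mul, ZMod.natCast_self] using this
      by_contra hdvd
      have hn0 : (n : ZMod p) ≠ 0 := by
        rwa [Ne, ZMod.intCast_zmod_eq_zero_iff_dvd]
      have hfd : (f.map (Int.castRingHom (ZMod p))).natDegree = 2 := by
        rw [hf]
        simp only [Polynomial.map_add, Polynomial.map_mul, Polynomial.map_pow,
          Polynomial.map_X, Polynomial.map_C]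
        compute_degree!
      have hf0 : f.map (Int.castRingHom (ZMod p)) ≠ 0 := by
        intro h
        rw [h] at hfd
        simp at hfd
      have hq0 : q.map (Int.castRingHom (ZMod p)) ≠ 0 := by
        intro h
        rw [h, mul_zero] at hmap
        exact hn0 (by simpa using congrArg (fun r => Polynomial.coeff r 0) hmap)
      have hdeg := congrArg Polynomial.natDegree hmap
      rw [Polynomial.natDegree_C, Polynomial.natDegree_mul hf0 hq0, hfd] at hdeg
      omega
    · rintro ⟨m, rfl⟩
      exact ⟨mk (C m), by rw [C_mul, map_mul, ← hp]⟩
  rw [← key k, Ideal.unit_mul_mem_iff_mem _ (hu.pow k), hconst]
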